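/- Let α, β, s be real numbers with 0 ≤ 2α < 3, β ∈ (0,2], s ≥ 1, D = 1 - 2α, u(s) = (βs - D)/2. Assume u(s) < 1 and 2κ < u(s) + 1. Then for every Ω ≥ 1 and every p ∈ ℝ³, ∫_{ℝ³} Ω^s · |k|^{-2α - βs} / ((|p - k|² + Ω)^{2(1-κ)}) dk ≤ C · Ω^{2(κ - (1 + u(s) - s)/2)} for a finite constant C independent of p and Ω. -/

import Mathlib

open MeasureTheory

section OffDiagAux

open Real Set

private lemma offdiag_aux_abs_rpow {r : ℝ} (hr : -1 < r) :
    Integrable ((Icc (-1:ℝ) 1).indicator (fun u => |u| ^ r)) := by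
  have h01 : IntegrableOn (fun u : ℝ => |u| ^ r) (Icc (0:ℝ) 1) := by
    rw [integrableOn_Icc_iff_integrableOn_Ioc]
    have h := intervalIntegral.intervalIntegrable_rpow' (a := 0) (b := 1) hr
    rw [intervalIntegrable_iff_integrableOn_Ioc_of_le (by norm_num : (0:ℝ) ≤ 1)] at h
    exact h.congr_fun (fun x hx => by rw [abs_of_pos hx.1]) measurableSet_Ioc
  have hneg : IntegrableOn (fun u : ℝ => |u| ^ r) (Icc (-1:ℝ) 0) := by
    have h1 : Integrable ((Icc (0:ℝ) 1).indicator (fun u => |u| ^ r)) :=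
      (integrable_indicator_iff measurableSet_Icc).2 h01
    have h2 := h1.comp_neg
    have heq : (fun t : ℝ => (Icc (0:ℝ) 1).indicator (fun u => |u| ^ r) (-t))
        = (Icc (-1:ℝ) 0).indicator (fun u => |u| ^ r) := by
      funext t
      by_cases ht : t ∈ Icc (-1:ℝ) 0
      · rw [Set.indicator_of_mem ht, Set.indicator_of_mem
          (Set.mem_Icc.mpr ⟨by linarith [(Set.mem_Icc.mp ht).2], by
            linarith [(Set.mem_Icc.mp ht).1]⟩), abs_neg]
      · rw [Set.indicator_of_notMem ht, Set.indicator_of_notMem]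
        intro hmem
        exact ht (Set.mem_Icc.mpr ⟨by linarith [(Set.mem_Icc.mp hmem).2], by
          linarith [(Set.mem_Icc.mp hmem).1]⟩)
    rw [heq] at h2
    exact (integrable_indicator_iff measurableSet_Icc).1 h2
  rw [integrable_indicator_iff measurableSet_Icc,
    show Icc (-1:ℝ) 1 = Icc (-1:ℝ) 0 ∪ Icc 0 1 from
      (Set.Icc_union_Icc_eq_Icc (by norm_num) (by norm_num)).symm]
  exact hneg.union h01

private lemma offdiag_coord_le_norm (x : EuclideanSpace ℝ (Fin 3)) (i : Fin 3) :
    |x i| ≤ ‖x‖ := by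
  rw [EuclideanSpace.norm_eq]
  calc |x i| = √(‖x i‖ ^ 2) := by rw [Real.sqrt_sq_eq_abs, Real.norm_eq_abs, abs_abs]
    _ ≤ √(∑ j, ‖x j‖ ^ 2) := Real.sqrt_le_sqrt
        (Finset.single_le_sum (fun j _ => sq_nonneg ‖x j‖) (Finset.mem_univ i))

private lemma offdiag_ae_coords :
    ∀ᵐ x : EuclideanSpace ℝ (Fin 3), ∀ i, x i ≠ 0 := by
  rw [MeasureTheory.ae_all_iff]
  intro i
  rw [ae_iff]
  have hset : {x : EuclideanSpace ℝ (Fin 3) | ¬ x i ≠ 0}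
      = (MeasurableEquiv.toLp 2 (Fin 3 → ℝ)).symm ⁻¹' {y : Fin 3 → ℝ | y i = 0} := by
    ext x
    simp only [Set.mem_setOf_eq, Set.mem_preimage, ne_eq, not_not]
    exact Iff.rfl
  rw [hset]
  have hmp := (EuclideanSpace.volume_preserving_symm_measurableEquiv_toLp (Fin 3)).measure_preimage
    (s := {y : Fin 3 → ℝ | y i = 0})
    ((measurableSet_eq_fun (measurable_pi_apply i) measurable_const).nullMeasurableSet)
  rw [hmp]
  have : (volume : Measure (Fin 3 → ℝ)) = Measure.pi (fun _ => volume) := rfl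
  rw [this]
  exact Measure.pi_hyperplane _ i 0

private lemma offdiag_integrableOn_ball {a : ℝ} (ha0 : 0 ≤ a) (ha3 : a < 3) :
    IntegrableOn (fun y : EuclideanSpace ℝ (Fin 3) => ‖y‖ ^ (-a)) (Metric.ball 0 1) := by
  set r : ℝ := -(a / 3) with hr_def
  have hr : -1 < r := by rw [hr_def]; linarith
  set h : ℝ → ℝ := (Icc (-1:ℝ) 1).indicator (fun u => |u| ^ r) with hh_def
  have hh : Integrable h := offdiag_aux_abs_rpow hr
  have hPi : Integrable (fun y : Fin 3 → ℝ => ∏ i, h (y i)) :=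
    Integrable.fintype_prod (fun _ => hh)
  have hE : Integrable (fun x : EuclideanSpace ℝ (Fin 3) => ∏ i, h (x i)) := by
    have := ((EuclideanSpace.volume_preserving_symm_measurableEquiv_toLp (Fin 3)).integrable_comp_emb
      (MeasurableEquiv.toLp 2 (Fin 3 → ℝ)).symm.measurableEmbedding
      (g := fun y : Fin 3 → ℝ => ∏ i, h (y i))).2 hPi
    exact this
  refine Integrable.mono' hE.integrableOn ?_ ?_
  · apply Measurable.aestronglyMeasurable
    fun_prop
  · filter_upwards [ae_restrict_mem measurableSet_ball,
      ae_restrict_of_ae offdiag_ae_coords] with x hx hcoords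
    have hx1 : ‖x‖ < 1 := mem_ball_zero_iff.mp hx
    have hx0 : 0 < ‖x‖ := by
      rcases eq_or_lt_of_le (norm_nonneg x) with h0 | h0
      · exfalso
        exact hcoords 0 (by
          have : x = 0 := norm_eq_zero.mp h0.symm
          rw [this]; rfl)
      · exact h0
    have hhx : ∀ i, h (x i) = |x i| ^ r := by
      intro i
      rw [hh_def, Set.indicator_of_mem]
      exact Set.mem_Icc.mpr ⟨by linarith [abs_nonneg (x i),
        (abs_le.mp (le_of_lt (lt_of_le_of_lt (offdiag_coord_le_norm x i) hx1))).1],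
        (abs_le.mp (le_of_lt (lt_of_le_of_lt (offdiag_coord_le_norm x i) hx1))).2⟩
    have hprodpos : 0 < ∏ i, |x i| :=
      Finset.prod_pos (fun i _ => abs_pos.mpr (hcoords i))
    have hprodle : ∏ i, |x i| ≤ ‖x‖ ^ (3:ℕ) := by
      calc ∏ i : Fin 3, |x i| ≤ ∏ _i : Fin 3, ‖x‖ :=
            Finset.prod_le_prod (fun i _ => abs_nonneg _)
              (fun i _ => offdiag_coord_le_norm x i)
        _ = ‖x‖ ^ (3:ℕ) := by simp [Finset.prod_const]
    rw [Real.norm_eq_abs, abs_of_nonneg (Real.rpow_nonneg (norm_nonneg x) _)]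
    calc ‖x‖ ^ (-a) = (‖x‖ ^ (3:ℕ)) ^ r := by
          rw [← Real.rpow_natCast ‖x‖ 3, ← Real.rpow_mul (norm_nonneg x), hr_def]
          congr 1
          push_cast
          ring
      _ ≤ (∏ i, |x i|) ^ r := by
          apply Real.rpow_le_rpow_of_nonpos hprodpos hprodle
          rw [hr_def]; linarith
      _ = ∏ i, |x i| ^ r := (Real.finset_prod_rpow _ _ (fun i _ => abs_nonneg _) r).symm
      _ = ∏ i, h (x i) := by
          exact Finset.prod_congr rfl (fun i _ => (hhx i).symm)

private lemma offdiag_decay {a b : ℝ} (ha0 : 0 ≤ a) (hb0 : 0 ≤ b) {A D t : ℝ}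
    (hA : 0 < A) (ht : 0 ≤ t) (h1 : 1 + t ≤ 2 * A) (h2 : (1 + t) ^ 2 ≤ 8 * D) (hD : 0 < D) :
    A ^ (-a) / D ^ b ≤ 2 ^ a * 8 ^ b * (1 + t) ^ (-(a + 2 * b)) := by
  have hpt : (0:ℝ) < 1 + t := by linarith
  have e1 : A ^ (-a) ≤ 2 ^ a * (1 + t) ^ (-a) := by
    have hq : (1 + t) / 2 ≤ A := by linarith
    calc A ^ (-a) ≤ ((1 + t) / 2) ^ (-a) :=
          Real.rpow_le_rpow_of_nonpos (by positivity) hq (neg_nonpos.mpr ha0)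
      _ = 2 ^ a * (1 + t) ^ (-a) := by
          rw [Real.div_rpow hpt.le (by norm_num : (0:ℝ) ≤ 2),
            Real.rpow_neg (by norm_num : (0:ℝ) ≤ 2), div_eq_mul_inv, inv_inv, mul_comm]
  have e2 : (D ^ b)⁻¹ ≤ 8 ^ b * (1 + t) ^ (-(2 * b)) := by
    have h' := Real.rpow_le_rpow_of_nonpos (by positivity : (0:ℝ) < (1 + t) ^ 2) h2
      (neg_nonpos.mpr hb0)
    have hsplit : ((8:ℝ) * D) ^ (-b) = 8 ^ (-b) * D ^ (-b) :=
      Real.mul_rpow (by norm_num) hD.le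
    have hcnv : (((1:ℝ) + t) ^ 2) ^ (-b) = (1 + t) ^ (-(2 * b)) := by
      rw [← Real.rpow_natCast (1 + t) 2, ← Real.rpow_mul hpt.le]
      norm_num
    rw [hsplit, hcnv] at h'
    have key : D ^ (-b) ≤ 8 ^ b * (1 + t) ^ (-(2 * b)) := by
      calc D ^ (-b) = 8 ^ b * (8 ^ (-b) * D ^ (-b)) := by
            rw [← mul_assoc, ← Real.rpow_add (by norm_num : (0:ℝ) < 8)]
            simp
        _ ≤ 8 ^ b * (1 + t) ^ (-(2 * b)) :=
            mul_le_mul_of_nonneg_left h' (Real.rpow_nonneg (by norm_num) _)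
    rwa [Real.rpow_neg hD.le] at key
  have hmul := mul_le_mul e1 e2 (by positivity) (by positivity)
  rw [div_eq_mul_inv]
  refine hmul.trans (le_of_eq ?_)
  rw [show (2:ℝ) ^ a * (1 + t) ^ (-a) * (8 ^ b * (1 + t) ^ (-(2 * b)))
      = 2 ^ a * 8 ^ b * ((1 + t) ^ (-a) * (1 + t) ^ (-(2 * b))) by ring,
    ← Real.rpow_add hpt]
  congr 1
  ring

private lemma offdiag_pointwise {a b : ℝ} (ha0 : 0 ≤ a) (hb0 : 0 ≤ b)
    (q y : EuclideanSpace ℝ (Fin 3)) :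
    ‖y‖ ^ (-a) / (‖q - y‖ ^ 2 + 1) ^ b
      ≤ (Metric.ball (0:EuclideanSpace ℝ (Fin 3)) 1).indicator
          (fun z => ‖z‖ ^ (-a)) y
        + 2 ^ a * 8 ^ b * (1 + ‖y‖) ^ (-(a + 2 * b))
        + 2 ^ a * 8 ^ b * (1 + ‖y - q‖) ^ (-(a + 2 * b)) := by
  have hD : (0:ℝ) < ‖q - y‖ ^ 2 + 1 := by positivity
  have hD1 : (1:ℝ) ≤ (‖q - y‖ ^ 2 + 1) ^ b := by
    calc (1:ℝ) = 1 ^ b := (Real.one_rpow b).symm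
      _ ≤ _ := Real.rpow_le_rpow (by norm_num) (by nlinarith [sq_nonneg ‖q - y‖]) hb0
  have hterm2 : (0:ℝ) ≤ 2 ^ a * 8 ^ b * (1 + ‖y‖) ^ (-(a + 2 * b)) := by positivity
  have hterm3 : (0:ℝ) ≤ 2 ^ a * 8 ^ b * (1 + ‖y - q‖) ^ (-(a + 2 * b)) := by positivity
  have hind : (0:ℝ) ≤ (Metric.ball (0:EuclideanSpace ℝ (Fin 3)) 1).indicator
      (fun z => ‖z‖ ^ (-a)) y :=
    Set.indicator_nonneg (fun z _ => Real.rpow_nonneg (norm_nonneg z) _) y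
  have hqy : ‖q - y‖ = ‖y - q‖ := norm_sub_rev q y
  rcases lt_or_ge ‖y‖ 1 with h1 | h1
  · have hmem : y ∈ Metric.ball (0:EuclideanSpace ℝ (Fin 3)) 1 := mem_ball_zero_iff.mpr h1
    rw [Set.indicator_of_mem hmem]
    have hds : ‖y‖ ^ (-a) / (‖q - y‖ ^ 2 + 1) ^ b ≤ ‖y‖ ^ (-a) :=
      div_le_self (Real.rpow_nonneg (norm_nonneg y) _) hD1
    linarith
  · have hy0 : (0:ℝ) < ‖y‖ := lt_of_lt_of_le one_pos h1
    rcases le_or_gt ‖y‖ (2 * ‖y - q‖) with h2 | h2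
    · have h8 : (1 + ‖y‖) ^ 2 ≤ 8 * (‖q - y‖ ^ 2 + 1) := by
        rw [hqy]
        nlinarith [sq_nonneg (‖y‖ - 1), sq_nonneg (2 * ‖y - q‖ - ‖y‖),
          norm_nonneg (y - q), norm_nonneg y]
      have key := offdiag_decay ha0 hb0 hy0 (norm_nonneg y) (by linarith) h8 hD
      linarith
    · have h1z : 1 + ‖y - q‖ ≤ 2 * ‖y‖ := by linarith
      have h8 : (1 + ‖y - q‖) ^ 2 ≤ 8 * (‖q - y‖ ^ 2 + 1) := by
        rw [hqy]
        nlinarith [sq_nonneg (‖y - q‖ - 1), norm_nonneg (y - q)]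
      have key := offdiag_decay ha0 hb0 hy0 (norm_nonneg (y - q)) h1z h8 hD
      linarith

end OffDiagAux

/-- Scaling bound for the off-diagonal integral
`∫ Ωˢ |k|^{-2α-βs} (|p-k|² + Ω)^{-2(1-κ)} dk ≤ C·Ω^{2(κ - (1 + u(s) - s)/2)}`
with `u(s) = (βs - D)/2`, `D = 1 - 2α`. -/
theorem offdiagonal_integral_scaling (α β s κ : ℝ)
    (hα0 : 0 ≤ 2 * α) (hα : 2 * α < 3) (hβ : 0 < β) (hβ2 : β ≤ 2) (hs : 1 ≤ s)
    (hu : (β * s - (1 - 2 * α)) / 2 < 1)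
    (hκ : 2 * κ < (β * s - (1 - 2 * α)) / 2 + 1) :
    ∃ C : ℝ, 0 ≤ C ∧ ∀ Ω : ℝ, 1 ≤ Ω → ∀ p : EuclideanSpace ℝ (Fin 3),
      (∫ k : EuclideanSpace ℝ (Fin 3),
          Ω ^ s * ‖k‖ ^ (-(2 * α + β * s)) / (‖p - k‖ ^ 2 + Ω) ^ (2 * (1 - κ)))
        ≤ C * Ω ^ (2 * (κ - (1 + (β * s - (1 - 2 * α)) / 2 - s) / 2)) := by
  set a : ℝ := 2 * α + β * s with ha_def
  set b : ℝ := 2 * (1 - κ) with hb_def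
  have hbs : 0 < β * s := mul_pos hβ (lt_of_lt_of_le one_pos hs)
  have ha0 : 0 ≤ a := by rw [ha_def]; linarith
  have ha3 : a < 3 := by rw [ha_def]; linarith
  have hb0 : 0 ≤ b := by rw [hb_def]; linarith
  have habo : (3:ℝ) < a + 2 * b := by rw [ha_def, hb_def]; linarith
  set g₀ : EuclideanSpace ℝ (Fin 3) → ℝ :=
    (Metric.ball (0:EuclideanSpace ℝ (Fin 3)) 1).indicator (fun z => ‖z‖ ^ (-a)) with hg₀_def
  have hg₀ : Integrable g₀ :=
    (integrable_indicator_iff measurableSet_ball).2 (offdiag_integrableOn_ball ha0 ha3)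
  set jb : EuclideanSpace ℝ (Fin 3) → ℝ := fun z => (1 + ‖z‖) ^ (-(a + 2 * b)) with hjb_def
  have hjb : Integrable jb := by
    apply integrable_one_add_norm
    rw [finrank_euclideanSpace_fin]
    exact_mod_cast habo
  set K : ℝ := 2 ^ a * 8 ^ b with hK_def
  have hK0 : 0 ≤ K := by positivity
  have hg₀nn : ∀ z, 0 ≤ g₀ z := fun z =>
    Set.indicator_nonneg (fun w _ => Real.rpow_nonneg (norm_nonneg w) _) z
  have hjbnn : ∀ z, 0 ≤ jb z := fun z => Real.rpow_nonneg (by positivity) _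
  refine ⟨(∫ z, g₀ z) + 2 * K * (∫ z, jb z),
    add_nonneg (integral_nonneg hg₀nn)
      (mul_nonneg (by linarith) (integral_nonneg hjbnn)), ?_⟩
  intro Ω hΩ p
  have hΩ0 : (0:ℝ) < Ω := lt_of_lt_of_le one_pos hΩ
  set r : ℝ := Ω ^ (1/2 : ℝ) with hr_def
  have hr0 : 0 < r := Real.rpow_pos_of_pos hΩ0 _
  have hr2 : r ^ (2:ℕ) = Ω := by
    rw [hr_def, ← Real.rpow_natCast (Ω ^ (1/2 : ℝ)) 2, ← Real.rpow_mul hΩ0.le]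
    norm_num
  set c : ℝ := Ω ^ s * r ^ (-a) * Ω ^ (-b) with hc_def
  have hc0 : 0 ≤ c := by positivity
  -- pointwise bound
  have hbound : ∀ k : EuclideanSpace ℝ (Fin 3),
      Ω ^ s * ‖k‖ ^ (-a) / (‖p - k‖ ^ 2 + Ω) ^ b
        ≤ c * (g₀ (r⁻¹ • k) + K * jb (r⁻¹ • k) + K * jb (r⁻¹ • (k - p))) := by
    intro k
    set y : EuclideanSpace ℝ (Fin 3) := r⁻¹ • k with hy_def
    set q : EuclideanSpace ℝ (Fin 3) := r⁻¹ • p with hq_def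
    have hkn : ‖k‖ = r * ‖y‖ := by
      rw [hy_def, norm_smul, norm_inv, Real.norm_eq_abs, abs_of_pos hr0, ← mul_assoc,
        mul_inv_cancel₀ hr0.ne', one_mul]
    have hden : ‖p - k‖ ^ 2 + Ω = Ω * (‖q - y‖ ^ 2 + 1) := by
      have hpk : p - k = r • (q - y) := by
        rw [hq_def, hy_def, smul_sub, smul_inv_smul₀ hr0.ne', smul_inv_smul₀ hr0.ne']
      rw [hpk, norm_smul, Real.norm_eq_abs, abs_of_pos hr0, mul_pow, hr2]
      ring
    have hXpos : (0:ℝ) < ‖q - y‖ ^ 2 + 1 := by positivity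
    have heq : Ω ^ s * ‖k‖ ^ (-a) / (‖p - k‖ ^ 2 + Ω) ^ b
        = c * (‖y‖ ^ (-a) / (‖q - y‖ ^ 2 + 1) ^ b) := by
      rw [hkn, Real.mul_rpow hr0.le (norm_nonneg y), hden,
        Real.mul_rpow hΩ0.le hXpos.le, hc_def, Real.rpow_neg hΩ0.le]
      have hΩb : Ω ^ b ≠ 0 := (Real.rpow_pos_of_pos hΩ0 b).ne'
      have hXb : (‖q - y‖ ^ 2 + 1) ^ b ≠ 0 := (Real.rpow_pos_of_pos hXpos b).ne'
      field_simp
    rw [heq]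
    have hyq : y - q = r⁻¹ • (k - p) := by rw [hy_def, hq_def, smul_sub]
    have hpw := offdiag_pointwise ha0 hb0 q y
    rw [hyq] at hpw
    exact mul_le_mul_of_nonneg_left hpw hc0
  -- integrability of the dominating function
  have hG1 : Integrable (fun k : EuclideanSpace ℝ (Fin 3) => g₀ (r⁻¹ • k)) :=
    (integrable_comp_smul_iff volume g₀ (inv_ne_zero hr0.ne')).2 hg₀
  have hG2 : Integrable (fun k : EuclideanSpace ℝ (Fin 3) => jb (r⁻¹ • k)) :=
    (integrable_comp_smul_iff volume jb (inv_ne_zero hr0.ne')).2 hjb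
  have hG3 : Integrable (fun k : EuclideanSpace ℝ (Fin 3) => jb (r⁻¹ • (k - p))) :=
    hG2.comp_sub_right p
  have hGint : Integrable (fun k : EuclideanSpace ℝ (Fin 3) =>
      c * (g₀ (r⁻¹ • k) + K * jb (r⁻¹ • k) + K * jb (r⁻¹ • (k - p)))) :=
    (((hG1.add (hG2.const_mul K)).add (hG3.const_mul K)).const_mul c)
  -- the comparison
  have hmono := integral_mono_of_nonneg
    (f := fun k : EuclideanSpace ℝ (Fin 3) =>
      Ω ^ s * ‖k‖ ^ (-a) / (‖p - k‖ ^ 2 + Ω) ^ b)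
    (g := fun k : EuclideanSpace ℝ (Fin 3) =>
      c * (g₀ (r⁻¹ • k) + K * jb (r⁻¹ • k) + K * jb (r⁻¹ • (k - p))))
    (Filter.Eventually.of_forall (fun k => by positivity))
    hGint (Filter.Eventually.of_forall hbound)
  refine hmono.trans ?_
  -- compute the dominating integral
  have hint3 : ∫ k : EuclideanSpace ℝ (Fin 3), jb (r⁻¹ • (k - p))
      = ∫ k : EuclideanSpace ℝ (Fin 3), jb (r⁻¹ • k) :=
    integral_sub_right_eq_self (fun k => jb (r⁻¹ • k)) p
  have hscale₀ : ∫ k : EuclideanSpace ℝ (Fin 3), g₀ (r⁻¹ • k)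
      = r ^ (3:ℕ) * ∫ z, g₀ z := by
    have := MeasureTheory.Measure.integral_comp_inv_smul_of_nonneg
      (volume : Measure (EuclideanSpace ℝ (Fin 3))) g₀ hr0.le
    rw [finrank_euclideanSpace_fin] at this
    simpa [smul_eq_mul] using this
  have hscalejb : ∫ k : EuclideanSpace ℝ (Fin 3), jb (r⁻¹ • k)
      = r ^ (3:ℕ) * ∫ z, jb z := by
    have := MeasureTheory.Measure.integral_comp_inv_smul_of_nonneg
      (volume : Measure (EuclideanSpace ℝ (Fin 3))) jb hr0.le
    rw [finrank_euclideanSpace_fin] at this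
    simpa [smul_eq_mul] using this
  have hG2K : Integrable (fun k : EuclideanSpace ℝ (Fin 3) => K * jb (r⁻¹ • k)) :=
    hG2.const_mul K
  have hG3K : Integrable (fun k : EuclideanSpace ℝ (Fin 3) => K * jb (r⁻¹ • (k - p))) :=
    hG3.const_mul K
  have hG12 : Integrable (fun k : EuclideanSpace ℝ (Fin 3) =>
      g₀ (r⁻¹ • k) + K * jb (r⁻¹ • k)) := hG1.add hG2K
  rw [integral_const_mul, integral_add hG12 hG3K, integral_add hG1 hG2K,
    integral_const_mul, integral_const_mul, hint3, hscale₀, hscalejb]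
  -- now pure algebra with rpow
  have hr3 : r ^ (3:ℕ) = Ω ^ (3/2 : ℝ) := by
    rw [hr_def, ← Real.rpow_natCast (Ω ^ (1/2 : ℝ)) 3, ← Real.rpow_mul hΩ0.le]
    norm_num
  have hra : r ^ (-a) = Ω ^ (-(a/2)) := by
    rw [hr_def, ← Real.rpow_mul hΩ0.le]
    congr 1
    ring
  have hexp : c * (r ^ (3:ℕ)) = Ω ^ (2 * (κ - (1 + (β * s - (1 - 2 * α)) / 2 - s) / 2)) := by
    rw [hc_def, hra, hr3, ← Real.rpow_add hΩ0, ← Real.rpow_add hΩ0, ← Real.rpow_add hΩ0]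
    congr 1
    rw [ha_def, hb_def]
    ring
  refine le_of_eq ?_
  rw [← hexp]
  ring
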